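/- Let n,m be positive integers, θ>0, and ξ,ξ'>0 with ξ ≠ ξ'. Then the total integral of the weight function vanishes: (1/(2π)^{n+m}) ∫_{[0,2π]^n} dx ∫_{[0,2π]^m} dy Δ_{n,m}(z(x),w(y);θ) = 0, where z_j(x) = ξ e^{i x_j} and w_k(y) = ξ' e^{i y_k}. Equivalently, ⟨1,1⟩'_{n,m,θ} = 0. -/

import Mathlib

open MeasureTheory MvPolynomial Complex

noncomputable section

/-- The cube of angles `[0, 2π]^n`. -/
def cube (n : ℕ) : Set (Fin n → ℝ) := Set.univ.pi fun _ => Set.Icc (0 : ℝ) (2 * Real.pi)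

/-- The point of the torus `T_ξ^n` with angles `x`. -/
def torus (n : ℕ) (ξ : ℝ) (x : Fin n → ℝ) : Fin n → ℂ :=
  fun j => (ξ : ℂ) * Complex.exp (Complex.I * (x j : ℂ))

/-- `Δ_N(z; θ) = ∏_{j<k} ((1 - z_j/z_k)(1 - z_k/z_j))^θ`, whose base equals
`|1 - z_j/z_k|^2 ≥ 0` on a torus, so it is defined via the real power. -/
def DeltaN (N : ℕ) (θ : ℝ) (z : Fin N → ℂ) : ℝ :=
  ∏ j : Fin N, ∏ k : Fin N,
    if j < k then (‖1 - z j / z k‖ ^ 2) ^ θ else 1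

/-- `Δ_{n,m}(z,w;θ) = Δ_n(z;θ) Δ_m(w;1/θ) / ∏_{j,k} (1 - z_j/w_k)(1 - w_k/z_j)`. -/
def DeltaNM (n m : ℕ) (θ : ℝ) (z : Fin n → ℂ) (w : Fin m → ℂ) : ℂ :=
  ((DeltaN n θ z * DeltaN m θ⁻¹ w : ℝ) : ℂ) /
    ∏ j : Fin n, ∏ k : Fin m, ((1 - z j / w k) * (1 - w k / z j))

/-- `q*(v) = conj (q(1/conj v))`. -/
def starEval {σ : Type*} (q : MvPolynomial σ ℂ) (v : σ → ℂ) : ℂ :=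
  starRingEnd ℂ (MvPolynomial.eval (fun i => ((starRingEnd ℂ) (v i))⁻¹) q)

/-- The sesquilinear product `⟨p,q⟩'_{n,m,θ}` with radii `ξ, ξ'`. -/
def sprod (n m : ℕ) (θ ξ ξ' : ℝ) (p q : MvPolynomial (Fin n ⊕ Fin m) ℂ) : ℂ :=
  ((1 / (n.factorial * m.factorial * (2 * Real.pi) ^ (n + m)) : ℝ) : ℂ) *
    ∫ x in cube n, ∫ y in cube m,
      DeltaNM n m θ (torus n ξ x) (torus m ξ' y) *
        MvPolynomial.eval (Sum.elim (torus n ξ x) (torus m ξ' y)) p *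
        starEval q (Sum.elim (torus n ξ x) (torus m ξ' y))

namespace WeightAux

lemma torus_ne_zero {p : ℕ} {η : ℝ} (hη : η ≠ 0) (x : Fin p → ℝ) (j : Fin p) :
    torus p η x j ≠ 0 :=
  mul_ne_zero (Complex.ofReal_ne_zero.mpr hη) (Complex.exp_ne_zero _)

lemma abs_torus {p : ℕ} {η : ℝ} (hη : 0 ≤ η) (x : Fin p → ℝ) (j : Fin p) :
    ‖torus p η x j‖ = η := by
  unfold torus
  rw [norm_mul, Complex.norm_of_nonneg hη, mul_comm Complex.I,
    Complex.norm_exp_ofReal_mul_I, mul_one]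

lemma continuous_torus_apply (p : ℕ) (η : ℝ) (j : Fin p) :
    Continuous fun x : Fin p → ℝ => torus p η x j :=
  continuous_const.mul (Complex.continuous_exp.comp
    (continuous_const.mul (Complex.continuous_ofReal.comp (continuous_apply j))))

lemma continuous_DeltaN (p : ℕ) (θ₁ : ℝ) (hθ₁ : 0 ≤ θ₁) (η : ℝ) (hη : η ≠ 0) :
    Continuous fun x : Fin p → ℝ => DeltaN p θ₁ (torus p η x) := by
  unfold DeltaN
  refine continuous_finset_prod _ fun j _ => continuous_finset_prod _ fun k _ => ?_
  by_cases h : j < k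
  · simp only [if_pos h]
    refine Continuous.rpow_const ?_ fun x => Or.inr hθ₁
    exact (continuous_norm.comp (continuous_const.sub
      (((continuous_torus_apply p η j)).div (continuous_torus_apply p η k)
        fun x => torus_ne_zero hη x k))).pow 2
  · simp only [if_neg h]
    exact continuous_const

lemma one_sub_div_ne_zero {a b : ℂ} (hb : b ≠ 0) (h : ‖a‖ ≠ ‖b‖) :
    1 - a / b ≠ 0 := by
  intro hc
  apply h
  have : a / b = 1 := by linear_combination -hc
  rw [div_eq_one_iff_eq hb] at this
  rw [this]

lemma torus_shift {p : ℕ} (η : ℝ) (x : Fin p → ℝ) (α : ℝ) :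
    torus p η (fun i => x i + α) = fun j => Complex.exp (Complex.I * α) * torus p η x j := by
  funext j
  unfold torus
  push_cast
  rw [mul_add, Complex.exp_add]
  ring

lemma torus_periodic {p : ℕ} (η : ℝ) (x : Fin p → ℝ) (k : Fin p → ℤ) :
    torus p η (fun i => x i + k i * (2 * Real.pi)) = torus p η x := by
  funext j
  unfold torus
  have : (Complex.I * ((x j + (k j) * (2 * Real.pi) : ℝ) : ℂ))
      = Complex.I * (x j : ℂ) + (k j : ℤ) * (2 * (Real.pi : ℂ) * Complex.I) := by
    push_cast; ring
  rw [this, Complex.exp_add, Complex.exp_int_mul_two_pi_mul_I, mul_one]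

lemma DeltaN_rot {p : ℕ} (θ₁ : ℝ) (z : Fin p → ℂ) {c : ℂ} (hc : c ≠ 0) :
    DeltaN p θ₁ (fun j => c * z j) = DeltaN p θ₁ z := by
  unfold DeltaN
  refine Finset.prod_congr rfl fun j _ => Finset.prod_congr rfl fun k _ => ?_
  rw [mul_div_mul_left _ _ hc]

lemma continuous_weight {X : Type*} [TopologicalSpace X] {p q : ℕ} {η η' : ℝ}
    (hη : 0 < η) (hη' : 0 < η') (hne : η ≠ η') {N : X → ℝ} (hN : Continuous N)
    {u : X → Fin p → ℂ} {v : X → Fin q → ℂ}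
    (hu : ∀ j, Continuous fun t => u t j) (hv : ∀ k, Continuous fun t => v t k)
    (hua : ∀ t j, ‖u t j‖ = η) (hva : ∀ t k, ‖v t k‖ = η') :
    Continuous fun t => ((N t : ℝ) : ℂ) /
      ∏ j, ∏ k, ((1 - u t j / v t k) * (1 - v t k / u t j)) := by
  have hu0 : ∀ t j, u t j ≠ 0 := fun t j h => hη.ne' (by rw [← hua t j, h, norm_zero])
  have hv0 : ∀ t k, v t k ≠ 0 := fun t k h => hη'.ne' (by rw [← hva t k, h, norm_zero])
  have hf1 : ∀ t j k, (1 - u t j / v t k) ≠ 0 := fun t j k =>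
    one_sub_div_ne_zero (hv0 t k) (by rw [hua t j, hva t k]; exact hne)
  have hf2 : ∀ t j k, (1 - v t k / u t j) ≠ 0 := fun t j k =>
    one_sub_div_ne_zero (hu0 t j) (by rw [hua t j, hva t k]; exact (Ne.symm hne))
  refine Continuous.div (Complex.continuous_ofReal.comp hN) ?_ ?_
  · refine continuous_finset_prod _ fun j _ => continuous_finset_prod _ fun k _ => ?_
    exact ((continuous_const.sub ((hu j).div (hv k) fun t => hv0 t k)).mul
      (continuous_const.sub ((hv k).div (hu j) fun t => hu0 t j)))
  · intro t
    refine Finset.prod_ne_zero_iff.mpr fun j _ => Finset.prod_ne_zero_iff.mpr fun k _ => ?_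
    exact mul_ne_zero (hf1 t j k) (hf2 t j k)

lemma cauchy_zero {p q : ℕ} (hp : 0 < p) (hq : 0 < q) {η η' : ℝ}
    (hη : 0 < η) (hlt : η < η')
    (z : Fin p → ℂ) (w : Fin q → ℂ)
    (hz : ∀ j, ‖z j‖ = η) (hw : ∀ k, ‖w k‖ = η') :
    ∫ α in Set.Icc (0:ℝ) (2*Real.pi),
      (∏ j, ∏ k, ((1 - Complex.exp (Complex.I * α) * z j / w k) *
        (1 - w k / (Complex.exp (Complex.I * α) * z j))))⁻¹ = 0 := by
  have hη' : 0 < η' := hη.trans hlt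
  have hz0 : ∀ j, z j ≠ 0 := fun j h => hη.ne' (by rw [← hz j, h, norm_zero])
  have hw0 : ∀ k, w k ≠ 0 := fun k h => hη'.ne' (by rw [← hw k, h, norm_zero])
  set g : ℂ → ℂ := fun ζ => ∏ j, ∏ k, (-(w k * z j * ζ) / (w k - ζ * z j)^2) with hg
  have hden : ∀ ζ : ℂ, ‖ζ‖ ≤ 1 → ∀ (j : Fin p) (k : Fin q), w k - ζ * z j ≠ 0 := by
    intro ζ hζ j k h
    rw [sub_eq_zero] at h
    have : ‖w k‖ = ‖ζ‖ * ‖z j‖ := by rw [h, norm_mul]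
    rw [hw k, hz j] at this
    nlinarith [norm_nonneg ζ]
  have hdiff : DiffContOnCl ℂ g (Metric.ball 0 1) := by
    have hd : ∀ ζ ∈ Metric.closedBall (0:ℂ) 1, DifferentiableAt ℂ g ζ := by
      intro ζ hζ
      rw [Metric.mem_closedBall, dist_zero_right] at hζ
      refine DifferentiableAt.fun_finsetProd fun j _ => DifferentiableAt.fun_finsetProd fun k _ => ?_
      exact DifferentiableAt.div (by fun_prop) (by fun_prop)
        (pow_ne_zero 2 (hden ζ hζ j k))
    refine DiffContOnCl.mk ?_ ?_
    · exact fun ζ hζ => ((hd ζ (Metric.ball_subset_closedBall hζ)).differentiableWithinAt)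
    · rw [closure_ball (0:ℂ) one_ne_zero]
      exact fun ζ hζ => (hd ζ hζ).continuousAt.continuousWithinAt
  have h0 : g 0 = 0 := by
    simp only [hg, mul_zero, neg_zero, zero_div, zero_mul, sub_zero]
    rw [Finset.prod_const, Finset.prod_const, zero_pow (by simpa using hq.ne'),
      zero_pow (by simpa using hp.ne')]
  have hcirc := hdiff.circleIntegral_sub_inv_smul (Metric.mem_ball_self one_pos)
  rw [h0, smul_zero] at hcirc
  have hunfold : (∮ ζ in C(0,1), (ζ - 0)⁻¹ • g ζ)
      = ∫ θ in (0:ℝ)..(2*Real.pi), Complex.I * g (Complex.exp (θ * Complex.I)) := by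
    rw [circleIntegral]
    refine intervalIntegral.integral_congr fun θ _ => ?_
    simp only [deriv_circleMap, circleMap, Complex.ofReal_one, zero_add, one_mul, sub_zero,
      smul_eq_mul]
    field_simp [Complex.exp_ne_zero]
  rw [hunfold] at hcirc
  rw [intervalIntegral.integral_const_mul] at hcirc
  have hint : ∫ θ in (0:ℝ)..(2*Real.pi), g (Complex.exp (θ * Complex.I)) = 0 := by
    rcases mul_eq_zero.mp hcirc with h | h
    · exact absurd h Complex.I_ne_zero
    · exact h
  rw [MeasureTheory.integral_Icc_eq_integral_Ioc,
    ← intervalIntegral.integral_of_le Real.two_pi_pos.le]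
  rw [← hint]
  refine intervalIntegral.integral_congr fun α _ => ?_
  have hζ0 : Complex.exp (Complex.I * α) ≠ 0 := Complex.exp_ne_zero _
  have hζabs : ‖Complex.exp (Complex.I * α)‖ = 1 := by
    rw [mul_comm, Complex.norm_exp_ofReal_mul_I]
  rw [show Complex.exp ((α:ℂ) * Complex.I) = Complex.exp (Complex.I * α) from by rw [mul_comm]]
  rw [hg]
  rw [← Finset.prod_inv_distrib]
  refine Finset.prod_congr rfl fun j _ => ?_
  rw [← Finset.prod_inv_distrib]
  refine Finset.prod_congr rfl fun k _ => ?_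
  have hd := hden _ hζabs.le j k
  have hwk := hw0 k
  have hzj := hz0 j
  have h1 : (1 : ℂ) - Complex.exp (Complex.I*α) * z j / w k ≠ 0 := by
    intro h; apply hd; rw [sub_eq_zero]; rw [sub_eq_zero, eq_comm, div_eq_one_iff_eq hwk] at h
    rw [h]
  have h2 : (1 : ℂ) - w k / (Complex.exp (Complex.I*α) * z j) ≠ 0 := by
    intro h; apply hd; rw [sub_eq_zero]
    rw [sub_eq_zero, eq_comm, div_eq_one_iff_eq (mul_ne_zero hζ0 hzj)] at h
    rw [h]
  refine (eq_inv_of_mul_eq_one_left ?_).symm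
  have hd' : w k - z j * Complex.exp (Complex.I*α) ≠ 0 := by rw [mul_comm]; exact hd
  field_simp
  ring

lemma shift_integral (p : ℕ) (f : (Fin p → ℝ) → ℂ) (hf : Continuous f)
    (hper : ∀ (x : Fin p → ℝ) (k : Fin p → ℤ),
      f (fun i => x i + k i * (2 * Real.pi)) = f x) (c : ℝ) :
    ∫ x in cube p, f (fun i => x i + c) = ∫ x in cube p, f x := by
  haveI : Fact (0 < 2 * Real.pi) := ⟨Real.two_pi_pos⟩
  set T : ℝ := 2 * Real.pi with hT
  have hT0 : T ≠ 0 := (by positivity : (0:ℝ) < T).ne'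
  set Q : Set (Fin p → ℝ) := Set.univ.pi fun _ => Set.Ioc (0:ℝ) T with hQdef
  have hae : (volume : Measure (Fin p → ℝ)).restrict (cube p) = volume.restrict Q := by
    refine Measure.restrict_congr_set ?_
    rw [MeasureTheory.ae_eq_set]
    constructor
    · have hsub : cube p \ Q ⊆ ⋃ i : Fin p, {x : Fin p → ℝ | x i = 0} := by
        rintro x ⟨hx, hnx⟩
        simp only [cube, Set.mem_pi, Set.mem_univ, true_implies] at hx
        simp only [hQdef, Set.mem_pi, Set.mem_univ, true_implies, not_forall] at hnx
        obtain ⟨i, hi⟩ := hnx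
        refine Set.mem_iUnion.mpr ⟨i, ?_⟩
        have h1 := hx i
        simp only [Set.mem_Icc] at h1
        simp only [Set.mem_Ioc, not_and_or, not_lt, not_le] at hi
        have : x i = 0 := by rcases hi with h | h <;> [linarith [h1.1]; linarith [h1.2]]
        simpa using this
      have hnull : (volume : Measure (Fin p → ℝ)) (⋃ i : Fin p, {x : Fin p → ℝ | x i = 0}) = 0 := by
        refine measure_iUnion_null fun i => ?_
        rw [MeasureTheory.volume_pi]
        exact Measure.pi_hyperplane _ i 0
      exact measure_mono_null hsub hnull
    · have : Q \ cube p = ∅ := by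
        rw [Set.diff_eq_empty]
        refine Set.pi_mono fun i _ => Set.Ioc_subset_Icc_self
      rw [this]; simp
  rw [hae]
  have hQ : (volume : Measure (Fin p → ℝ)).restrict Q
      = Measure.pi fun _ : Fin p => volume.restrict (Set.Ioc (0:ℝ) (0 + T)) := by
    rw [zero_add]
    refine (Measure.pi_eq fun s hs => ?_).symm
    rw [Measure.restrict_apply (MeasurableSet.univ_pi hs), hQdef, ← Set.pi_inter_distrib,
      MeasureTheory.volume_pi_pi]
    exact Finset.prod_congr rfl fun i _ => (Measure.restrict_apply (hs i)).symm
  rw [hQ]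
  set μ : Measure (Fin p → ℝ) :=
    Measure.pi fun _ : Fin p => volume.restrict (Set.Ioc (0:ℝ) (0 + T)) with hμ
  set Φ : (Fin p → ℝ) → (Fin p → AddCircle T) := fun x i => ((x i : ℝ) : AddCircle T) with hΦdef
  have hΦ : MeasurePreserving Φ μ (Measure.pi fun _ : Fin p => (volume : Measure (AddCircle T))) :=
    measurePreserving_pi _ _ fun _ => AddCircle.measurePreserving_mk T 0
  set F : (Fin p → AddCircle T) → ℂ :=
    fun u => f fun i => ((AddCircle.equivIco T 0 (u i) : ℝ)) with hFdef
  have hFmeas : Measurable F := by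
    refine hf.measurable.comp (measurable_pi_lambda _ fun i => ?_)
    exact measurable_subtype_coe.comp
      ((AddCircle.measurableEquivIco T 0).measurable.comp (measurable_pi_apply i))
  have hcoord : ∀ t : ℝ, ((AddCircle.equivIco T 0 ((t : ℝ) : AddCircle T) : ℝ))
      = t + (-⌊t / T⌋ : ℤ) * T := by
    intro t
    rw [AddCircle.coe_equivIco_mk_apply, Int.fract]
    push_cast
    rw [sub_mul, div_mul_cancel₀ _ hT0]
    ring
  have hkey : ∀ x : Fin p → ℝ, F (fun i => ((x i : ℝ) : AddCircle T)) = f x := by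
    intro x
    show f (fun i => ((AddCircle.equivIco T 0 (((x i : ℝ)) : AddCircle T) : ℝ))) = f x
    rw [show (fun i => ((AddCircle.equivIco T 0 (((x i : ℝ)) : AddCircle T) : ℝ)))
        = fun i => x i + (-⌊x i / T⌋ : ℤ) * T from funext fun i => hcoord (x i)]
    exact hper x _
  set v : Fin p → AddCircle T := fun _ => ((c : ℝ) : AddCircle T) with hv
  have e1 : ∫ x, f x ∂μ
      = ∫ u, F u ∂(Measure.pi fun _ : Fin p => (volume : Measure (AddCircle T))) := by
    rw [← hΦ.map_eq, integral_map hΦ.measurable.aemeasurable hFmeas.aestronglyMeasurable]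
    exact integral_congr_ae (Filter.Eventually.of_forall fun x => (hkey x).symm)
  have e2 : ∫ x, f (fun i => x i + c) ∂μ
      = ∫ u, F (u + v) ∂(Measure.pi fun _ : Fin p => (volume : Measure (AddCircle T))) := by
    rw [← hΦ.map_eq, integral_map (f := fun u => F (u + v)) hΦ.measurable.aemeasurable
      (hFmeas.comp (measurable_add_const v)).aestronglyMeasurable]
    refine integral_congr_ae (Filter.Eventually.of_forall fun x => ?_)
    have : Φ x + v = fun i => (((x i + c : ℝ)) : AddCircle T) := by
      funext i; rfl
    show f (fun i => x i + c) = F (Φ x + v)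
    rw [this, hkey (fun i => x i + c)]
  rw [e1, e2]
  exact integral_add_right_eq_self F v

lemma inner_zero (p q : ℕ) (hp : 0 < p) (hq : 0 < q) (θ₁ : ℝ) (hθ₁ : 0 ≤ θ₁)
    {η η' : ℝ} (hη : 0 < η) (hlt : η < η') (C : ℝ) (v : Fin q → ℂ)
    (hv : ∀ k, ‖v k‖ = η') :
    ∫ x in cube p, ((DeltaN p θ₁ (torus p η x) * C : ℝ) : ℂ) /
      ∏ j, ∏ k, ((1 - torus p η x j / v k) * (1 - v k / torus p η x j)) = 0 := by
  have hη' : 0 < η' := hη.trans hlt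
  set f : (Fin p → ℝ) → ℂ := fun x => ((DeltaN p θ₁ (torus p η x) * C : ℝ) : ℂ) /
      ∏ j, ∏ k, ((1 - torus p η x j / v k) * (1 - v k / torus p η x j)) with hf
  show ∫ x in cube p, f x = 0
  have hcont : Continuous f := by
    rw [hf]
    exact continuous_weight hη hη' hlt.ne
      (((continuous_DeltaN p θ₁ hθ₁ η hη.ne')).mul continuous_const)
      (fun j => continuous_torus_apply p η j) (fun k => continuous_const)
      (fun x j => abs_torus hη.le x j) (fun x k => hv k)
  have hper : ∀ (x : Fin p → ℝ) (k : Fin p → ℤ),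
      f (fun i => x i + k i * (2 * Real.pi)) = f x := by
    intro x k
    simp only [hf]
    rw [torus_periodic η x k]
  have key : ∀ x : Fin p → ℝ,
      (∫ α in Set.Icc (0:ℝ) (2*Real.pi), f (fun i => x i + α)) = 0 := by
    intro x
    have hrot : ∀ α : ℝ, f (fun i => x i + α)
        = ((DeltaN p θ₁ (torus p η x) * C : ℝ) : ℂ) *
          (∏ j, ∏ k, ((1 - Complex.exp (Complex.I * α) * torus p η x j / v k) *
            (1 - v k / (Complex.exp (Complex.I * α) * torus p η x j))))⁻¹ := by
      intro α
      simp only [hf]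
      rw [torus_shift η x α]
      simp only []
      rw [DeltaN_rot θ₁ (torus p η x) (Complex.exp_ne_zero _), div_eq_mul_inv]
    calc (∫ α in Set.Icc (0:ℝ) (2*Real.pi), f (fun i => x i + α))
        = ∫ α in Set.Icc (0:ℝ) (2*Real.pi),
            ((DeltaN p θ₁ (torus p η x) * C : ℝ) : ℂ) *
            (∏ j, ∏ k, ((1 - Complex.exp (Complex.I * α) * torus p η x j / v k) *
              (1 - v k / (Complex.exp (Complex.I * α) * torus p η x j))))⁻¹ :=
          integral_congr_ae (Filter.Eventually.of_forall fun α => hrot α)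
      _ = ((DeltaN p θ₁ (torus p η x) * C : ℝ) : ℂ) *
            ∫ α in Set.Icc (0:ℝ) (2*Real.pi),
            (∏ j, ∏ k, ((1 - Complex.exp (Complex.I * α) * torus p η x j / v k) *
              (1 - v k / (Complex.exp (Complex.I * α) * torus p η x j))))⁻¹ :=
          integral_const_mul _ _
      _ = 0 := by
          rw [cauchy_zero hp hq hη hlt (torus p η x) v (fun j => abs_torus hη.le x j) hv,
            mul_zero]
  have h2 : (2*Real.pi) • (∫ x in cube p, f x) = 0 := by
    calc (2*Real.pi) • (∫ x in cube p, f x)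
        = ∫ _α in Set.Icc (0:ℝ) (2*Real.pi), (∫ x in cube p, f x) := by
          rw [setIntegral_const, measureReal_def, Real.volume_Icc, sub_zero,
            ENNReal.toReal_ofReal Real.two_pi_pos.le]
      _ = ∫ α in Set.Icc (0:ℝ) (2*Real.pi), ∫ x in cube p, f (fun i => x i + α) :=
          integral_congr_ae (Filter.Eventually.of_forall fun α =>
            (shift_integral p f hcont hper α).symm)
      _ = ∫ x in cube p, ∫ α in Set.Icc (0:ℝ) (2*Real.pi), f (fun i => x i + α) := by
          apply MeasureTheory.integral_integral_swap
          rw [Measure.prod_restrict, ← Measure.volume_eq_prod]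
          refine ContinuousOn.integrableOn_compact
            (isCompact_Icc.prod (isCompact_univ_pi fun i => isCompact_Icc)) ?_
          refine Continuous.continuousOn ?_
          exact hcont.comp (continuous_pi fun i =>
            ((continuous_apply i).comp continuous_snd).add continuous_fst)
      _ = 0 := by
          simp only [key, integral_zero]
  have := smul_eq_zero.mp h2
  rcases this with h | h
  · exact absurd h Real.two_pi_pos.ne'
  · exact h

end WeightAux

open WeightAux in
/-- the total integral of the weight function vanishes, i.e.
`⟨1,1⟩'_{n,m,θ} = 0`. -/
theorem weight_total_integral_zero (n m : ℕ) (hn : 0 < n) (hm : 0 < m) (θ : ℝ) (hθ : 0 < θ)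
    (ξ ξ' : ℝ) (hξ : 0 < ξ) (hξ' : 0 < ξ') (hne : ξ ≠ ξ') :
    ((1 / (2 * Real.pi) ^ (n + m) : ℝ) : ℂ) *
        (∫ x in cube n, ∫ y in cube m, DeltaNM n m θ (torus n ξ x) (torus m ξ' y)) = 0 ∧
      sprod n m θ ξ ξ' 1 1 = 0 := by
  have hθ' : (0:ℝ) < θ⁻¹ := inv_pos.mpr hθ
  have key : (∫ x in cube n, ∫ y in cube m, DeltaNM n m θ (torus n ξ x) (torus m ξ' y)) = 0 := by
    rcases lt_or_gt_of_ne hne with hlt | hlt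
    · -- ξ < ξ' : swap the integrals, then integrate over x first
      have hswap : (∫ x in cube n, ∫ y in cube m, DeltaNM n m θ (torus n ξ x) (torus m ξ' y))
          = ∫ y in cube m, ∫ x in cube n, DeltaNM n m θ (torus n ξ x) (torus m ξ' y) := by
        apply MeasureTheory.integral_integral_swap
        rw [Measure.prod_restrict, ← Measure.volume_eq_prod]
        refine ContinuousOn.integrableOn_compact
          ((isCompact_univ_pi fun i => isCompact_Icc).prod
            (isCompact_univ_pi fun i => isCompact_Icc)) ?_
        refine Continuous.continuousOn ?_
        have : Continuous fun t : (Fin n → ℝ) × (Fin m → ℝ) =>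
            ((DeltaN n θ (torus n ξ t.1) * DeltaN m θ⁻¹ (torus m ξ' t.2) : ℝ) : ℂ) /
            ∏ j, ∏ k, ((1 - torus n ξ t.1 j / torus m ξ' t.2 k) *
              (1 - torus m ξ' t.2 k / torus n ξ t.1 j)) := by
          refine continuous_weight hξ hξ' hne
            (((continuous_DeltaN n θ hθ.le ξ hξ.ne').comp continuous_fst).mul
              ((continuous_DeltaN m θ⁻¹ hθ'.le ξ' hξ'.ne').comp continuous_snd))
            (fun j => (continuous_torus_apply n ξ j).comp continuous_fst)
            (fun k => (continuous_torus_apply m ξ' k).comp continuous_snd)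
            (fun t j => abs_torus hξ.le t.1 j) (fun t k => abs_torus hξ'.le t.2 k)
        exact this
      rw [hswap]
      have hz : ∀ y : Fin m → ℝ,
          (∫ x in cube n, DeltaNM n m θ (torus n ξ x) (torus m ξ' y)) = 0 := by
        intro y
        have := inner_zero n m hn hm θ hθ.le hξ hlt (DeltaN m θ⁻¹ (torus m ξ' y))
          (torus m ξ' y) (fun k => abs_torus hξ'.le y k)
        simpa only [DeltaNM] using this
      simp only [hz, integral_zero]
    · -- ξ' < ξ : integrate over y first
      have hz : ∀ x : Fin n → ℝ,
          (∫ y in cube m, DeltaNM n m θ (torus n ξ x) (torus m ξ' y)) = 0 := by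
        intro x
        have heq : ∀ y, DeltaNM n m θ (torus n ξ x) (torus m ξ' y)
            = ((DeltaN m θ⁻¹ (torus m ξ' y) * DeltaN n θ (torus n ξ x) : ℝ) : ℂ) /
              ∏ k, ∏ j, ((1 - torus m ξ' y k / torus n ξ x j) *
                (1 - torus n ξ x j / torus m ξ' y k)) := by
          intro y
          simp only [DeltaNM]
          rw [mul_comm (DeltaN n θ (torus n ξ x))]
          congr 1
          rw [Finset.prod_comm]
          exact Finset.prod_congr rfl fun k _ => Finset.prod_congr rfl fun j _ => mul_comm _ _
        simp only [heq]
        exact inner_zero m n hm hn θ⁻¹ hθ'.le hξ' hlt (DeltaN n θ (torus n ξ x))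
          (torus n ξ x) (fun j => abs_torus hξ.le x j)
      simp only [hz, integral_zero]
  refine ⟨by rw [key, mul_zero], ?_⟩
  unfold sprod
  have h1 : ∀ v : Fin n ⊕ Fin m → ℂ,
      MvPolynomial.eval v (1 : MvPolynomial (Fin n ⊕ Fin m) ℂ) = 1 := fun v => map_one _
  have h2 : ∀ v : Fin n ⊕ Fin m → ℂ,
      starEval (1 : MvPolynomial (Fin n ⊕ Fin m) ℂ) v = 1 := fun v => by
    simp [starEval]
  simp only [h1, h2, mul_one]
  rw [key, mul_zero]

end
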